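/- arXiv:1906.09599 — 4 statements merged into one kernel-verified Lean document; each statement's English description precedes it below -/
import Mathlib

section
/- Let $n \ge 1$, $p \ge 1$, $\lambda > 1$. For every nonnegative compactly supported measurable function $g$ on $\mathbb{R}^n$ with $\|g\|_1 > 0$ and $\|g\|_\lambda < \infty$, and with $l(t) = \mathrm{vol}(\{g \ge t\})$, there exists a constant $A_{n,p,\lambda} > 0$ depending only on $n,p,\lambda$ such that $\|g\|_1 \le A_{n,p,\lambda}\, \|g\|_\lambda^{\frac{\lambda p}{(n+p)(\lambda-1)+p}} \left(\int_0^\infty l(t)^{\frac{n+p}{n}} dt\right)^{\frac{(\lambda-1)n}{(n+p)(\lambda-1)+p}}$. Equivalently, $\int_0^\infty l(t)^{\frac{n+p}{n}} dt \ge a_{n,p,\lambda}\, \|g\|_1^{\frac{(n+p)(\lambda-1)+p}{(\lambda-1)n}} \|g\|_\lambda^{-\frac{\lambda p}{(\lambda-1)n}}$ with $a_{n,p,\lambda} = A_{n,p,\lambda}^{-\frac{(n+p)(\lambda-1)+p}{(\lambda-1)n}}$. -/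
open MeasureTheory Real Set
open scoped ENNReal

private lemma aux_term1 (a b γ μ : ℝ) (ha : 0 < a) (hb : 0 < b) (hγ : 0 < γ) (hμ : 0 < μ) :
    a * ((b/a) ^ (1/(γ+μ))) ^ γ = a ^ (μ/(γ+μ)) * b ^ (γ/(γ+μ)) := by
  have hba : (0:ℝ) ≤ b / a := (div_pos hb ha).le
  have hγμ : 0 < γ + μ := by linarith
  rw [← Real.rpow_mul hba, show 1/(γ+μ)*γ = γ/(γ+μ) by ring,
    Real.div_rpow hb.le ha.le,
    show μ/(γ+μ) = 1 - γ/(γ+μ) by field_simp; ring,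
    Real.rpow_sub ha, Real.rpow_one]
  field_simp

private lemma aux_term2 (a b γ μ : ℝ) (ha : 0 < a) (hb : 0 < b) (hγ : 0 < γ) (hμ : 0 < μ) :
    b * ((b/a) ^ (1/(γ+μ))) ^ (-μ) = a ^ (μ/(γ+μ)) * b ^ (γ/(γ+μ)) := by
  have hba : (0:ℝ) ≤ b / a := (div_pos hb ha).le
  have hγμ : 0 < γ + μ := by linarith
  rw [← Real.rpow_mul hba, show 1/(γ+μ)*(-μ) = -(μ/(γ+μ)) by ring,
    Real.rpow_neg hba, Real.div_rpow hb.le ha.le, inv_div,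
    show γ/(γ+μ) = 1 - μ/(γ+μ) by field_simp; ring,
    Real.rpow_sub hb, Real.rpow_one]
  field_simp

private lemma aux_rearrange (A x i j α β : ℝ) (hA : 0 < A) (hx : 0 < x) (hi : 0 < i) (hj : 0 < j)
    (hβ : 0 < β) (h : i ≤ A * x ^ α * j ^ β) :
    A ^ (-(1/β)) * i ^ (1/β) * x ^ (-(α/β)) ≤ j := by
  have h2 : i ^ (1/β) ≤ A ^ (1/β) * x ^ (α/β) * j := by
    calc i ^ (1/β) ≤ (A * x ^ α * j ^ β) ^ (1/β) :=
          Real.rpow_le_rpow hi.le h (by positivity)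
      _ = A ^ (1/β) * x ^ (α/β) * j := by
          rw [Real.mul_rpow (by positivity) (by positivity),
            Real.mul_rpow hA.le (by positivity),
            ← Real.rpow_mul hx.le, ← Real.rpow_mul hj.le,
            show α * (1/β) = α/β by ring, show β * (1/β) = 1 by field_simp,
            Real.rpow_one]
  have e1 : A ^ (-(1/β)) * A ^ (1/β) = 1 := by
    rw [← Real.rpow_add hA]; simp
  have e2 : x ^ (α/β) * x ^ (-(α/β)) = 1 := by
    rw [← Real.rpow_add hx]; simp
  calc A ^ (-(1/β)) * i ^ (1/β) * x ^ (-(α/β))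
      ≤ A ^ (-(1/β)) * (A ^ (1/β) * x ^ (α/β) * j) * x ^ (-(α/β)) := by
        gcongr
    _ = (A ^ (-(1/β)) * A ^ (1/β)) * (x ^ (α/β) * x ^ (-(α/β))) * j := by ring
    _ = j := by rw [e1, e2]; ring

theorem stmt3 (n : ℕ) (hn : 1 ≤ n) (p lam : ℝ) (hp : 1 ≤ p) (hlam : 1 < lam) :
    ∃ A : ℝ, 0 < A ∧
      ∀ g : EuclideanSpace ℝ (Fin n) → ℝ, Measurable g → (∀ x, 0 ≤ g x) →
        HasCompactSupport g →
        0 < (∫⁻ x, ENNReal.ofReal (g x)) →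
        (∫⁻ x, ENNReal.ofReal (g x ^ lam)) ^ ((1 : ℝ) / lam) < ∞ →
        ((∫⁻ x, ENNReal.ofReal (g x)) ≤
            ENNReal.ofReal A *
              ((∫⁻ x, ENNReal.ofReal (g x ^ lam)) ^ ((1 : ℝ) / lam)) ^
                (lam * p / (((n : ℝ) + p) * (lam - 1) + p)) *
              (∫⁻ t in Set.Ioi (0 : ℝ), volume {x | t ≤ g x} ^ (((n : ℝ) + p) / n)) ^
                ((lam - 1) * n / (((n : ℝ) + p) * (lam - 1) + p))) ∧
          (ENNReal.ofReal (A ^ (-((((n : ℝ) + p) * (lam - 1) + p) / ((lam - 1) * n)))) *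
              (∫⁻ x, ENNReal.ofReal (g x)) ^ ((((n : ℝ) + p) * (lam - 1) + p) / ((lam - 1) * n)) *
              ((∫⁻ x, ENNReal.ofReal (g x ^ lam)) ^ ((1 : ℝ) / lam)) ^
                (-(lam * p) / ((lam - 1) * n)) ≤
            ∫⁻ t in Set.Ioi (0 : ℝ), volume {x | t ≤ g x} ^ (((n : ℝ) + p) / n)) := by
  have hn0 : (0:ℝ) < n := by exact_mod_cast hn
  have hp0 : (0:ℝ) < p := by linarith
  have hnp : (0:ℝ) < (n:ℝ) + p := by linarith
  set D : ℝ := ((n:ℝ) + p) * (lam - 1) + p with hDdef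
  have hD0 : 0 < D := by
    have : 0 < ((n:ℝ) + p) * (lam - 1) := mul_pos hnp (by linarith)
    linarith
  set α : ℝ := lam * p / D with hαdef
  set β : ℝ := (lam - 1) * n / D with hβdef
  have hα0 : 0 < α := by
    rw [hαdef]
    exact div_pos (mul_pos (by linarith) hp0) hD0
  have hβ0 : 0 < β := by
    rw [hβdef]
    exact div_pos (mul_pos (by linarith) hn0) hD0
  refine ⟨2 * (lam - 1) ^ (-(p/D)),
    mul_pos two_pos (Real.rpow_pos_of_pos (by linarith) _), ?_⟩
  set A : ℝ := 2 * (lam - 1) ^ (-(p/D)) with hAdef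
  have hA0 : 0 < A := by
    rw [hAdef]
    exact mul_pos two_pos (Real.rpow_pos_of_pos (by linarith) _)
  intro g hg hg0 _hgsupp hIpos hKfin
  set l : ℝ → ℝ≥0∞ := fun t => volume {x | t ≤ g x} with hl
  have hlanti : Antitone l := fun t₁ t₂ h => measure_mono (fun x hx => le_trans h hx)
  have hlmeas : Measurable l := hlanti.measurable
  set I := ∫⁻ x, ENNReal.ofReal (g x) with hIdef
  set K := ∫⁻ x, ENNReal.ofReal (g x ^ lam) with hKdef
  set J := ∫⁻ t in Ioi (0:ℝ), l t ^ (((n:ℝ) + p) / n) with hJdef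
  have hKmeas : Measurable fun x => ENNReal.ofReal (g x ^ lam) := by fun_prop
  -- layer cake
  have hlayer : I = ∫⁻ t in Ioi (0:ℝ), l t :=
    lintegral_eq_lintegral_meas_le volume (Filter.Eventually.of_forall hg0) hg.aemeasurable
  -- K positive, finite
  have hK0 : K ≠ 0 := by
    intro h0
    rw [hKdef, lintegral_eq_zero_iff hKmeas] at h0
    have : (fun x => ENNReal.ofReal (g x)) =ᵐ[volume] 0 := by
      filter_upwards [h0] with x hx
      simp only [Pi.zero_apply, ENNReal.ofReal_eq_zero] at hx ⊢
      by_contra h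
      push_neg at h
      have hgx : 0 < g x := lt_of_le_of_ne (hg0 x) (by intro he; rw [← he] at h; simp at h)
      have : 0 < g x ^ lam := Real.rpow_pos_of_pos hgx lam
      linarith
    rw [hIdef, lintegral_congr_ae this] at hIpos
    simp at hIpos
  have hlam0 : (0:ℝ) < 1 / lam := by positivity
  have hKtop : K ≠ ⊤ := by
    intro h
    rw [h, ENNReal.top_rpow_of_pos hlam0] at hKfin
    exact (lt_irrefl _ hKfin)
  have hKr0 : (K : ℝ≥0∞) ^ ((1:ℝ)/lam) ≠ 0 := by
    simp [ENNReal.rpow_eq_zero_iff, hK0, hKtop, hlam0, not_lt.2 hlam0.le]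
  have hKrtop : (K : ℝ≥0∞) ^ ((1:ℝ)/lam) ≠ ⊤ := hKfin.ne
  -- Chebyshev
  have cheb : ∀ t : ℝ, 0 < t → l t ≤ ENNReal.ofReal (t ^ (-lam)) * K := by
    intro t ht
    have hsub : {x | t ≤ g x} ⊆ {x | ENNReal.ofReal (t ^ lam) ≤ ENNReal.ofReal (g x ^ lam)} := by
      intro x hx
      exact ENNReal.ofReal_le_ofReal (Real.rpow_le_rpow ht.le hx (by linarith))
    have h1 : ENNReal.ofReal (t ^ lam) * l t ≤ K := by
      calc ENNReal.ofReal (t ^ lam) * l t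
          ≤ ENNReal.ofReal (t ^ lam) *
            volume {x | ENNReal.ofReal (t ^ lam) ≤ ENNReal.ofReal (g x ^ lam)} := by
            gcongr
            exact measure_mono hsub
        _ ≤ K := mul_meas_ge_le_lintegral₀ hKmeas.aemeasurable _
    have htpow : 0 < t ^ lam := Real.rpow_pos_of_pos ht lam
    have hne : ENNReal.ofReal (t ^ lam) ≠ 0 := by simp [htpow]
    have hnetop : ENNReal.ofReal (t ^ lam) ≠ ⊤ := ENNReal.ofReal_ne_top
    have : l t ≤ (ENNReal.ofReal (t ^ lam))⁻¹ * K := by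
      calc l t = (ENNReal.ofReal (t ^ lam))⁻¹ * (ENNReal.ofReal (t ^ lam) * l t) := by
            rw [← mul_assoc, ENNReal.inv_mul_cancel hne hnetop, one_mul]
        _ ≤ (ENNReal.ofReal (t ^ lam))⁻¹ * K := mul_le_mul_right h1 _
    rwa [← ENNReal.ofReal_inv_of_pos htpow, ← Real.rpow_neg ht.le] at this
  -- tail integral value
  have tailint : ∀ s : ℝ, 0 < s →
      (∫⁻ t in Ioi s, ENNReal.ofReal (t ^ (-lam))) =
        ENNReal.ofReal (s ^ (1 - lam) / (lam - 1)) := by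
    intro s hs
    have hint : IntegrableOn (fun t : ℝ => t ^ (-lam)) (Ioi s) :=
      integrableOn_Ioi_rpow_of_lt (by linarith) hs
    have hnn : 0 ≤ᵐ[volume.restrict (Ioi s)] fun t : ℝ => t ^ (-lam) := by
      rw [Filter.EventuallyLE, ae_restrict_iff' measurableSet_Ioi]
      filter_upwards with t ht
      exact Real.rpow_nonneg (le_of_lt (lt_trans hs ht)) _
    rw [← ofReal_integral_eq_lintegral_ofReal hint hnn,
      integral_Ioi_rpow_of_lt (by linarith) hs]
    congr 1
    rw [show -lam + 1 = 1 - lam by ring]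
    have h1 : 1 - lam ≠ 0 := by linarith
    have h2 : lam - 1 ≠ 0 := by linarith
    field_simp
    ring
  -- tail bound
  have tail : ∀ s : ℝ, 0 < s →
      (∫⁻ t in Ioi s, l t) ≤ ENNReal.ofReal (s ^ (1 - lam) / (lam - 1)) * K := by
    intro s hs
    calc (∫⁻ t in Ioi s, l t)
        ≤ ∫⁻ t in Ioi s, ENNReal.ofReal (t ^ (-lam)) * K := by
          refine setLIntegral_mono' measurableSet_Ioi (fun t ht => cheb t (lt_trans hs ht))
      _ = (∫⁻ t in Ioi s, ENNReal.ofReal (t ^ (-lam))) * K := by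
          rw [lintegral_mul_const _ (by fun_prop)]
      _ = ENNReal.ofReal (s ^ (1 - lam) / (lam - 1)) * K := by rw [tailint s hs]
  -- Hölder
  have holder : ∀ s : ℝ, 0 < s →
      (∫⁻ t in Ioc (0:ℝ) s, l t) ≤
        J ^ ((n:ℝ) / ((n:ℝ) + p)) * ENNReal.ofReal s ^ (p / ((n:ℝ) + p)) := by
    intro s hs
    have hconj : Real.HolderConjugate (((n:ℝ) + p) / n) (((n:ℝ) + p) / p) := by
      rw [Real.holderConjugate_iff]
      constructor
      · rw [lt_div_iff₀ hn0]; linarith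
      · rw [inv_div, inv_div]
        field_simp
    have h := ENNReal.lintegral_mul_le_Lp_mul_Lq (volume.restrict (Ioc (0:ℝ) s)) hconj
      hlmeas.aemeasurable (aemeasurable_const (b := (1:ℝ≥0∞)))
    simp only [mul_one, one_mul, ENNReal.one_rpow, lintegral_const, Measure.restrict_apply,
      MeasurableSet.univ, univ_inter, Pi.mul_apply] at h
    calc (∫⁻ t in Ioc (0:ℝ) s, l t) ≤
        (∫⁻ t in Ioc (0:ℝ) s, l t ^ (((n:ℝ) + p) / n)) ^ (1 / (((n:ℝ) + p) / n)) *
          (volume (Ioc (0:ℝ) s)) ^ (1 / (((n:ℝ) + p) / p)) := h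
      _ ≤ J ^ ((n:ℝ) / ((n:ℝ) + p)) * ENNReal.ofReal s ^ (p / ((n:ℝ) + p)) := by
          rw [one_div_div, one_div_div]
          gcongr
          · exact lintegral_mono_set Ioc_subset_Ioi_self
          · rw [Real.volume_Ioc, sub_zero]
  -- key inequality
  have keyineq : ∀ s : ℝ, 0 < s →
      I ≤ J ^ ((n:ℝ) / ((n:ℝ) + p)) * ENNReal.ofReal s ^ (p / ((n:ℝ) + p)) +
        ENNReal.ofReal (s ^ (1 - lam) / (lam - 1)) * K := by
    intro s hs
    have hsplit : (∫⁻ t in Ioi (0:ℝ), l t) =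
        (∫⁻ t in Ioc (0:ℝ) s, l t) + ∫⁻ t in Ioi s, l t := by
      rw [← lintegral_union measurableSet_Ioi (Ioc_disjoint_Ioi le_rfl),
        Ioc_union_Ioi_eq_Ioi hs.le]
    rw [hlayer, hsplit]
    exact add_le_add (holder s hs) (tail s hs)
  -- case J = ⊤
  by_cases hJtop : J = ⊤
  · constructor
    · rw [hJtop, ENNReal.top_rpow_of_pos hβ0, ENNReal.mul_top]
      · exact le_top
      · intro h0
        rcases mul_eq_zero.mp h0 with h | h
        · exact absurd h (by simp [hA0])
        · rw [ENNReal.rpow_eq_zero_iff] at h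
          rcases h with ⟨h1, _⟩ | ⟨_, h2⟩
          · exact hKr0 h1
          · linarith
    · rw [hJtop]; exact le_top
  -- J ≠ 0
  have hJ0 : J ≠ 0 := by
    intro h0
    rw [hJdef, lintegral_eq_zero_iff (by fun_prop)] at h0
    have hl0 : l =ᵐ[volume.restrict (Ioi (0:ℝ))] 0 := by
      filter_upwards [h0] with t ht
      simp only [Pi.zero_apply, ENNReal.rpow_eq_zero_iff] at ht ⊢
      rcases ht with ⟨h1, _⟩ | ⟨_, h2⟩
      · exact h1
      · exfalso
        have : (0:ℝ) < ((n:ℝ) + p) / n := by positivity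
        linarith
    rw [hlayer, lintegral_congr_ae hl0] at hIpos
    simp at hIpos
  -- I finite
  have hItop : I ≠ ⊤ := by
    refine ne_top_of_le_ne_top ?_ (keyineq 1 one_pos)
    exact ENNReal.add_ne_top.mpr
      ⟨ENNReal.mul_ne_top (ENNReal.rpow_ne_top_of_nonneg (by positivity) hJtop)
        (ENNReal.rpow_ne_top_of_nonneg (by positivity) ENNReal.ofReal_ne_top),
       ENNReal.mul_ne_top ENNReal.ofReal_ne_top hKtop⟩
  -- real versions
  set i := I.toReal with hidef
  set j := J.toReal with hjdef
  set k := K.toReal with hkdef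
  have hipos : 0 < i := ENNReal.toReal_pos hIpos.ne' hItop
  have hjpos : 0 < j := ENNReal.toReal_pos hJ0 hJtop
  have hkpos : 0 < k := ENNReal.toReal_pos hK0 hKtop
  have realkey : ∀ s : ℝ, 0 < s →
      i ≤ j ^ ((n:ℝ) / ((n:ℝ) + p)) * s ^ (p / ((n:ℝ) + p)) +
        (s ^ (1 - lam) / (lam - 1)) * k := by
    intro s hs
    have h := keyineq s hs
    have hR : J ^ ((n:ℝ) / ((n:ℝ) + p)) * ENNReal.ofReal s ^ (p / ((n:ℝ) + p)) +
        ENNReal.ofReal (s ^ (1 - lam) / (lam - 1)) * K ≠ ⊤ :=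
      ENNReal.add_ne_top.mpr
        ⟨ENNReal.mul_ne_top (ENNReal.rpow_ne_top_of_nonneg (by positivity) hJtop)
          (ENNReal.rpow_ne_top_of_nonneg (by positivity) ENNReal.ofReal_ne_top),
         ENNReal.mul_ne_top ENNReal.ofReal_ne_top hKtop⟩
    have := ENNReal.toReal_mono hR h
    rwa [ENNReal.toReal_add
        (ENNReal.mul_ne_top (ENNReal.rpow_ne_top_of_nonneg (by positivity) hJtop)
          (ENNReal.rpow_ne_top_of_nonneg (by positivity) ENNReal.ofReal_ne_top))
        (ENNReal.mul_ne_top ENNReal.ofReal_ne_top hKtop),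
      ENNReal.toReal_mul, ENNReal.toReal_mul, ← ENNReal.toReal_rpow, ← ENNReal.toReal_rpow,
      ENNReal.toReal_ofReal hs.le,
      ENNReal.toReal_ofReal
        (div_nonneg (Real.rpow_nonneg hs.le _) (by linarith))] at this
  -- optimize
  set γ : ℝ := p / ((n:ℝ) + p) with hγdef
  set μ : ℝ := lam - 1 with hμdef
  have hγ0 : 0 < γ := by rw [hγdef]; positivity
  have hμ0 : 0 < μ := by rw [hμdef]; linarith
  set a : ℝ := j ^ ((n:ℝ) / ((n:ℝ) + p)) with hadef
  set b : ℝ := k / μ with hbdef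
  have hapos : 0 < a := by rw [hadef]; positivity
  have hbpos : 0 < b := by rw [hbdef]; positivity
  set s₀ : ℝ := (b/a) ^ (1/(γ+μ)) with hs₀def
  have hs₀pos : 0 < s₀ := by rw [hs₀def]; positivity
  have hopt : i ≤ 2 * a ^ (μ/(γ+μ)) * b ^ (γ/(γ+μ)) := by
    have h := realkey s₀ hs₀pos
    have e2 : s₀ ^ (1 - lam) / μ * k = b * s₀ ^ (-μ) := by
      rw [show (1 : ℝ) - lam = -μ by rw [hμdef]; ring, hbdef]
      ring
    calc i ≤ a * s₀ ^ γ + b * s₀ ^ (-μ) := by linarith [h, e2]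
      _ = 2 * a ^ (μ/(γ+μ)) * b ^ (γ/(γ+μ)) := by
          rw [hs₀def, aux_term1 a b γ μ hapos hbpos hγ0 hμ0,
            aux_term2 a b γ μ hapos hbpos hγ0 hμ0]
          ring
  -- rewrite the optimized bound
  set x : ℝ := (K ^ ((1:ℝ)/lam)).toReal with hxdef
  have hxpos : 0 < x := ENNReal.toReal_pos hKr0 hKrtop
  have hxk : x = k ^ ((1:ℝ)/lam) := by rw [hxdef, hkdef, ENNReal.toReal_rpow]
  have hγμ : γ + μ = D / ((n:ℝ) + p) := by
    rw [hγdef, hμdef, hDdef]; field_simp; try ring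
  have hfinal1 : i ≤ A * x ^ α * j ^ β := by
    have ea : a ^ (μ/(γ+μ)) = j ^ β := by
      rw [hadef, ← Real.rpow_mul hjpos.le, hβdef, hγμ, hμdef]
      congr 1
      field_simp
      try ring
    have eb : b ^ (γ/(γ+μ)) = k ^ (p/D) * (lam - 1) ^ (-(p/D)) := by
      rw [hbdef, Real.div_rpow hkpos.le hμ0.le, hγμ, hγdef,
        show p / ((n:ℝ)+p) / (D / ((n:ℝ)+p)) = p/D by field_simp; try ring,
        Real.rpow_neg (by linarith : (0:ℝ) ≤ lam - 1), hμdef, div_eq_mul_inv]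
    have ex : x ^ α = k ^ (p/D) := by
      rw [hxk, ← Real.rpow_mul hkpos.le, hαdef]
      congr 1
      field_simp
      try ring
    calc i ≤ 2 * a ^ (μ/(γ+μ)) * b ^ (γ/(γ+μ)) := hopt
      _ = A * x ^ α * j ^ β := by rw [ea, eb, ex, hAdef]; ring
  -- conclusion
  have hJfin : J ≠ ⊤ := hJtop
  constructor
  · -- first inequality
    have hRtop : ENNReal.ofReal A * (K ^ ((1:ℝ)/lam)) ^ α * J ^ β ≠ ⊤ :=
      ENNReal.mul_ne_top
        (ENNReal.mul_ne_top ENNReal.ofReal_ne_top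
          (ENNReal.rpow_ne_top_of_nonneg hα0.le hKrtop))
        (ENNReal.rpow_ne_top_of_nonneg hβ0.le hJfin)
    rw [← ENNReal.toReal_le_toReal hItop hRtop]
    simp only [ENNReal.toReal_mul, ← ENNReal.toReal_rpow, ENNReal.toReal_ofReal hA0.le]
    rw [← hxk]
    exact hfinal1
  · -- second inequality
    have hre : A ^ (-(1/β)) * i ^ (1/β) * x ^ (-(α/β)) ≤ j :=
      aux_rearrange A x i j α β hA0 hxpos hipos hjpos hβ0 hfinal1
    have hβe : 1/β = D / ((lam - 1) * n) := by
      rw [hβdef]; rw [one_div_div]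
    have hαβe : α/β = lam * p / ((lam - 1) * n) := by
      have h1 : ((lam - 1:ℝ)) * n ≠ 0 := ne_of_gt (mul_pos (by linarith) hn0)
      have h2 : D ≠ 0 := ne_of_gt hD0
      rw [hαdef, hβdef, hμdef]
      field_simp
      try ring
    have hLtop : ENNReal.ofReal (A ^ (-(D / ((lam - 1) * n)))) *
        I ^ (D / ((lam - 1) * n)) *
        (K ^ ((1:ℝ)/lam)) ^ (-(lam * p) / ((lam - 1) * n)) ≠ ⊤ := by
      refine ENNReal.mul_ne_top (ENNReal.mul_ne_top ENNReal.ofReal_ne_top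
        (ENNReal.rpow_ne_top_of_nonneg (by positivity) hItop)) ?_
      rw [Ne, ENNReal.rpow_eq_top_iff]
      push_neg
      exact ⟨fun h => absurd h hKr0, fun h => absurd h hKrtop⟩
    rw [← ENNReal.toReal_le_toReal hLtop hJfin]
    simp only [ENNReal.toReal_mul, ← ENNReal.toReal_rpow,
      ENNReal.toReal_ofReal (Real.rpow_nonneg hA0.le _)]
    rw [← hxk]
    calc A ^ (-(D / ((lam - 1) * n))) * i ^ (D / ((lam - 1) * n)) *
          x ^ (-(lam * p) / ((lam - 1) * n))
        = A ^ (-(1/β)) * i ^ (1/β) * x ^ (-(α/β)) := by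
          rw [hβe, hαβe, neg_div]
      _ ≤ j := hre
end

section
/- Let $n \ge 1$, $p \ge 1$, and $\lambda \in (\frac{n}{n+p}, 1)$. For every nonnegative compactly supported measurable function $g$ on $\mathbb{R}^n$ with $\|g\|_1, \|g\|_\lambda \in (0,\infty)$, writing $l(t) = \mathrm{vol}(\{g \ge t\})$, there exists a constant $B_{n,p,\lambda} > 0$ depending only on $n,p,\lambda$ such that $\|g\|_\lambda^\lambda \le B_{n,p,\lambda}\, \|g\|_1^{\frac{(n+p)(\lambda-1)+p}{p}} \left(\int_0^\infty l(t)^{\frac{n+p}{n}} dt\right)^{\frac{(1-\lambda)n}{p}}$. -/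
open MeasureTheory Real
open scoped ENNReal

lemma aux_rpow_int (s β : ℝ) (hs : 0 < s) (hβ : -1 < β) :
    ∫⁻ t in Set.Ioc 0 s, ENNReal.ofReal (t ^ β) = ENNReal.ofReal (s ^ (β + 1) / (β + 1)) := by
  have hβ1 : 0 < β + 1 := by linarith
  have hint : IntegrableOn (fun t : ℝ => t ^ β) (Set.Ioc 0 s) := by
    have := intervalIntegral.intervalIntegrable_rpow' (a := 0) (b := s) hβ
    rwa [intervalIntegrable_iff, Set.uIoc_of_le hs.le] at this
  have hnn : 0 ≤ᵐ[volume.restrict (Set.Ioc 0 s)] fun t : ℝ => t ^ β := by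
    filter_upwards [self_mem_ae_restrict measurableSet_Ioc] with t ht
    exact Real.rpow_nonneg ht.1.le _
  rw [← ofReal_integral_eq_lintegral_ofReal hint hnn]
  congr 1
  rw [← intervalIntegral.integral_of_le hs.le, integral_rpow (Or.inl hβ),
    Real.zero_rpow hβ1.ne', sub_zero]

theorem stmt4 (n : ℕ) (hn : 1 ≤ n) (p lam : ℝ) (hp : 1 ≤ p)
    (hlam1 : (n : ℝ) / ((n : ℝ) + p) < lam) (hlam2 : lam < 1) :
    ∃ B : ℝ, 0 < B ∧
      ∀ g : EuclideanSpace ℝ (Fin n) → ℝ, Measurable g → (∀ x, 0 ≤ g x) →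
        HasCompactSupport g →
        0 < (∫⁻ x, ENNReal.ofReal (g x)) → (∫⁻ x, ENNReal.ofReal (g x)) < ∞ →
        0 < (∫⁻ x, ENNReal.ofReal (g x ^ lam)) →
        (∫⁻ x, ENNReal.ofReal (g x ^ lam)) < ∞ →
        (∫⁻ x, ENNReal.ofReal (g x ^ lam)) ≤
          ENNReal.ofReal B *
            (∫⁻ x, ENNReal.ofReal (g x)) ^ ((((n : ℝ) + p) * (lam - 1) + p) / p) *
            (∫⁻ t in Set.Ioi (0 : ℝ), volume {x | t ≤ g x} ^ (((n : ℝ) + p) / n)) ^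
              ((1 - lam) * n / p) := by
  have hn' : (0:ℝ) < n := by exact_mod_cast hn
  have hp' : (0:ℝ) < p := by linarith
  have hnp : (0:ℝ) < (n:ℝ) + p := by linarith
  have hlam0 : 0 < lam := lt_trans (div_pos hn' hnp) hlam1
  set A : ℝ := (((n:ℝ) + p) * (lam - 1) + p) / p with hA_def
  have hA : 0 < A := by
    apply div_pos _ hp'
    have h1 : (n:ℝ) < lam * ((n:ℝ) + p) := by
      have := (div_lt_iff₀ hnp).mp hlam1
      linarith
    nlinarith
  have hB : 0 < lam * (A ^ (-(p / ((n:ℝ) + p))) + 1) :=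
    mul_pos hlam0 (add_pos (Real.rpow_pos_of_pos hA _) one_pos)
  refine ⟨lam * (A ^ (-(p / ((n:ℝ) + p))) + 1), hB, ?_⟩
  intro g hg hg0 _hgc hG0 hGtop hI0 hItop
  have hb : 0 < (1 - lam) * n / p := by
    apply div_pos (mul_pos (by linarith) hn') hp'
  set μl : ℝ → ℝ≥0∞ := fun t => volume {x : EuclideanSpace ℝ (Fin n) | t ≤ g x} with hμl
  have hμl_anti : Antitone μl := fun _ _ h => measure_mono fun x hx => h.trans hx
  have hμl_meas : Measurable μl := hμl_anti.measurable
  set G := ∫⁻ x, ENNReal.ofReal (g x) with hGdef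
  set I := ∫⁻ x, ENNReal.ofReal (g x ^ lam) with hIdef
  set J := ∫⁻ t in Set.Ioi (0:ℝ), μl t ^ (((n:ℝ) + p) / n) with hJdef
  by_cases hJtop : J = ⊤
  · rw [hJtop, ENNReal.top_rpow_of_pos hb, ENNReal.mul_top]
    · exact le_top
    · exact mul_ne_zero (by simp [(ENNReal.ofReal_pos.mpr hB).ne'])
        (ENNReal.rpow_pos hG0 hGtop.ne).ne'
  -- main case
  have hJ0 : J ≠ 0 := by
    intro h0
    have hmeas : Measurable fun t : ℝ => μl t ^ (((n:ℝ) + p) / n) :=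
      hμl_meas.pow_const _
    rw [hJdef, lintegral_eq_zero_iff hmeas] at h0
    have key2 : G = ∫⁻ t in Set.Ioi (0:ℝ), μl t :=
      lintegral_eq_lintegral_meas_le volume (ae_of_all _ hg0) hg.aemeasurable
    have hG : G = 0 := by
      rw [key2, lintegral_eq_zero_iff hμl_meas]
      filter_upwards [h0] with t ht
      rcases (ENNReal.rpow_eq_zero_iff).mp ht with ⟨h1, _⟩ | ⟨_, h2⟩
      · exact h1
      · exact absurd h2 (not_lt.mpr (div_pos hnp hn').le)
    exact hG0.ne' hG
  have hjr : 0 < J.toReal := ENNReal.toReal_pos hJ0 hJtop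
  have hgr : 0 < G.toReal := ENNReal.toReal_pos hG0.ne' hGtop.ne
  set jr := J.toReal with hjrdef
  set gr := G.toReal with hgrdef
  set s : ℝ := gr ^ (((n:ℝ) + p) / p) * jr ^ (-((n:ℝ) / p)) with hs_def
  have hs : 0 < s := mul_pos (rpow_pos_of_pos hgr _) (rpow_pos_of_pos hjr _)
  set h : ℝ → ℝ := fun t => max ((t / s) ^ (lam - 1) - 1) 0 with hh_def
  have hh_nn : ∀ t, 0 ≤ h t := fun t => le_max_right _ _
  set H : ℝ → ℝ≥0∞ := fun t => ENNReal.ofReal (h t) with hH_def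
  have hH_meas : Measurable H := ENNReal.measurable_ofReal.comp
    ((((measurable_id.div_const s).pow measurable_const).sub measurable_const).max
      measurable_const)
  have key1 : I = ENNReal.ofReal lam *
      ∫⁻ t in Set.Ioi (0:ℝ), μl t * ENNReal.ofReal (t ^ (lam - 1)) :=
    lintegral_rpow_eq_lintegral_meas_le_mul volume (ae_of_all _ hg0) hg.aemeasurable hlam0
  have key2 : G = ∫⁻ t in Set.Ioi (0:ℝ), μl t :=
    lintegral_eq_lintegral_meas_le volume (ae_of_all _ hg0) hg.aemeasurable
  -- pointwise bound
  have stepA : ∀ t ∈ Set.Ioi (0:ℝ), μl t * ENNReal.ofReal (t ^ (lam - 1)) ≤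
      ENNReal.ofReal (s ^ (lam - 1)) * (μl t * H t + μl t) := by
    intro t ht
    have ht' : (0:ℝ) < t := ht
    have h1 : t ^ (lam - 1) = s ^ (lam - 1) * (t / s) ^ (lam - 1) := by
      rw [Real.div_rpow ht'.le hs.le]
      field_simp
    have h2 : (t / s) ^ (lam - 1) ≤ h t + 1 := by
      have := le_max_left ((t / s) ^ (lam - 1) - 1) 0
      rw [hh_def]; dsimp only; linarith
    calc μl t * ENNReal.ofReal (t ^ (lam - 1))
        = μl t * (ENNReal.ofReal (s ^ (lam - 1)) * ENNReal.ofReal ((t / s) ^ (lam - 1))) := by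
          rw [h1, ENNReal.ofReal_mul (Real.rpow_nonneg hs.le _)]
      _ ≤ μl t * (ENNReal.ofReal (s ^ (lam - 1)) * (H t + 1)) := by
          gcongr
          calc ENNReal.ofReal ((t / s) ^ (lam - 1)) ≤ ENNReal.ofReal (h t + 1) :=
                ENNReal.ofReal_le_ofReal h2
            _ = H t + 1 := by
                rw [ENNReal.ofReal_add (hh_nn t) zero_le_one, ENNReal.ofReal_one]
      _ = ENNReal.ofReal (s ^ (lam - 1)) * (μl t * H t + μl t) := by ring
  have stepB : (∫⁻ t in Set.Ioi (0:ℝ), μl t * ENNReal.ofReal (t ^ (lam - 1))) ≤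
      ENNReal.ofReal (s ^ (lam - 1)) * ((∫⁻ t in Set.Ioi (0:ℝ), μl t * H t) + G) := by
    calc (∫⁻ t in Set.Ioi (0:ℝ), μl t * ENNReal.ofReal (t ^ (lam - 1)))
        ≤ ∫⁻ t in Set.Ioi (0:ℝ), ENNReal.ofReal (s ^ (lam - 1)) * (μl t * H t + μl t) :=
          setLIntegral_mono' measurableSet_Ioi stepA
      _ = ENNReal.ofReal (s ^ (lam - 1)) * ∫⁻ t in Set.Ioi (0:ℝ), (μl t * H t + μl t) :=
          lintegral_const_mul' _ _ ENNReal.ofReal_ne_top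
      _ = ENNReal.ofReal (s ^ (lam - 1)) * ((∫⁻ t in Set.Ioi (0:ℝ), μl t * H t) + G) := by
          rw [lintegral_add_left (by exact hμl_meas.mul hH_meas : Measurable fun t => μl t * H t), key2]
  -- Hölder
  have hconj : Real.HolderConjugate (((n:ℝ) + p) / n) (((n:ℝ) + p) / p) := by
    constructor
    · rw [inv_div, inv_div, ← add_div, div_self hnp.ne', inv_one]
    · exact div_pos hnp hn'
    · exact div_pos hnp hp'
  have stepC : (∫⁻ t in Set.Ioi (0:ℝ), μl t * H t) ≤
      J ^ ((n:ℝ) / ((n:ℝ) + p)) *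
        (∫⁻ t in Set.Ioi (0:ℝ), H t ^ (((n:ℝ) + p) / p)) ^ (p / ((n:ℝ) + p)) := by
    have := ENNReal.lintegral_mul_le_Lp_mul_Lq (volume.restrict (Set.Ioi (0:ℝ))) hconj
      hμl_meas.aemeasurable hH_meas.aemeasurable
    rw [one_div_div, one_div_div] at this
    simpa using this
  -- the one-dimensional integral
  have stepD : (∫⁻ t in Set.Ioi (0:ℝ), H t ^ (((n:ℝ) + p) / p)) ≤ ENNReal.ofReal (s / A) := by
    set β : ℝ := (lam - 1) * (((n:ℝ) + p) / p) with hβ_def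
    have hβA : β + 1 = A := by
      rw [hβ_def, hA_def]; field_simp
    have hβ : -1 < β := by linarith
    have hexp : (0:ℝ) < ((n:ℝ) + p) / p := div_pos hnp hp'
    have pointwise : ∀ t ∈ Set.Ioi (0:ℝ), H t ^ (((n:ℝ) + p) / p) ≤
        (Set.Ioc (0:ℝ) s).indicator (fun t => ENNReal.ofReal (s ^ (-β) * t ^ β)) t := by
      intro t ht
      have ht' : (0:ℝ) < t := ht
      rcases le_or_gt t s with hts | hts
      · rw [Set.indicator_of_mem (Set.mem_Ioc.mpr ⟨ht', hts⟩)]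
        have h1 : h t ≤ (t / s) ^ (lam - 1) :=
          max_le (by linarith) (Real.rpow_nonneg (div_nonneg ht'.le hs.le) _)
        have h2 : h t ^ (((n:ℝ) + p) / p) ≤ ((t / s) ^ (lam - 1)) ^ (((n:ℝ) + p) / p) :=
          Real.rpow_le_rpow (hh_nn t) h1 hexp.le
        have h3 : ((t / s) ^ (lam - 1)) ^ (((n:ℝ) + p) / p) = s ^ (-β) * t ^ β := by
          rw [← Real.rpow_mul (div_nonneg ht'.le hs.le), ← hβ_def,
            Real.div_rpow ht'.le hs.le, Real.rpow_neg hs.le, div_eq_mul_inv, mul_comm]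
        rw [hH_def]
        dsimp only
        rw [ENNReal.ofReal_rpow_of_nonneg (hh_nn t) hexp.le]
        exact ENNReal.ofReal_le_ofReal (h2.trans h3.le)
      · have hzero : h t = 0 := by
          apply max_eq_right
          have h1 : (t / s) ^ (lam - 1) ≤ 1 :=
            Real.rpow_le_one_of_one_le_of_nonpos ((one_le_div hs).mpr hts.le) (by linarith)
          linarith
        rw [hH_def]
        dsimp only
        rw [hzero, ENNReal.ofReal_zero, ENNReal.zero_rpow_of_pos hexp]
        exact bot_le
    calc (∫⁻ t in Set.Ioi (0:ℝ), H t ^ (((n:ℝ) + p) / p))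
        ≤ ∫⁻ t in Set.Ioi (0:ℝ),
            (Set.Ioc (0:ℝ) s).indicator (fun t => ENNReal.ofReal (s ^ (-β) * t ^ β)) t :=
          setLIntegral_mono' measurableSet_Ioi pointwise
      _ = ∫⁻ t in Set.Ioc (0:ℝ) s, ENNReal.ofReal (s ^ (-β) * t ^ β) := by
          rw [lintegral_indicator measurableSet_Ioc,
            Measure.restrict_restrict measurableSet_Ioc,
            Set.inter_eq_left.mpr Set.Ioc_subset_Ioi_self]
      _ = ENNReal.ofReal (s ^ (-β)) * ∫⁻ t in Set.Ioc (0:ℝ) s, ENNReal.ofReal (t ^ β) := by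
          simp_rw [ENNReal.ofReal_mul (Real.rpow_nonneg hs.le _)]
          rw [lintegral_const_mul' _ _ ENNReal.ofReal_ne_top]
      _ = ENNReal.ofReal (s ^ (-β)) * ENNReal.ofReal (s ^ (β + 1) / (β + 1)) := by
          rw [aux_rpow_int s β hs hβ]
      _ = ENNReal.ofReal (s / A) := by
          rw [← ENNReal.ofReal_mul (Real.rpow_nonneg hs.le _)]
          congr 1
          rw [← mul_div_assoc, ← Real.rpow_add hs, show -β + (β + 1) = 1 by ring,
            Real.rpow_one, hβA]
  -- assemble
  have hmain : I ≤ ENNReal.ofReal lam * (ENNReal.ofReal (s ^ (lam - 1)) *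
      (J ^ ((n:ℝ) / ((n:ℝ) + p)) * ENNReal.ofReal (s / A) ^ (p / ((n:ℝ) + p)) + G)) := by
    rw [key1]
    refine mul_le_mul_right (stepB.trans ?_) _
    have hCD : (∫⁻ t in Set.Ioi (0:ℝ), μl t * H t) ≤
        J ^ ((n:ℝ) / ((n:ℝ) + p)) * ENNReal.ofReal (s / A) ^ (p / ((n:ℝ) + p)) :=
      stepC.trans (mul_le_mul_right (ENNReal.rpow_le_rpow stepD (div_pos hp' hnp).le) _)
    exact mul_le_mul_right (add_le_add_left hCD G) _
  have hsA : 0 < s / A := div_pos hs hA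
  have hJr : J = ENNReal.ofReal jr := (ENNReal.ofReal_toReal hJtop).symm
  have hGr : G = ENNReal.ofReal gr := (ENNReal.ofReal_toReal hGtop.ne).symm
  have collapse : ENNReal.ofReal lam * (ENNReal.ofReal (s ^ (lam - 1)) *
      (J ^ ((n:ℝ) / ((n:ℝ) + p)) * ENNReal.ofReal (s / A) ^ (p / ((n:ℝ) + p)) + G)) =
      ENNReal.ofReal (lam * (s ^ (lam - 1) *
        (jr ^ ((n:ℝ) / ((n:ℝ) + p)) * (s / A) ^ (p / ((n:ℝ) + p)) + gr))) := by
    rw [hJr, hGr, ENNReal.ofReal_rpow_of_pos hjr, ENNReal.ofReal_rpow_of_pos hsA,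
      ← ENNReal.ofReal_mul (Real.rpow_nonneg (ENNReal.toReal_nonneg) _),
      ← ENNReal.ofReal_add (mul_nonneg (Real.rpow_nonneg ENNReal.toReal_nonneg _)
        (Real.rpow_nonneg hsA.le _)) hgr.le,
      ← ENNReal.ofReal_mul (Real.rpow_nonneg hs.le _),
      ← ENNReal.ofReal_mul hlam0.le]
  have hreal : lam * (s ^ (lam - 1) *
      (jr ^ ((n:ℝ) / ((n:ℝ) + p)) * (s / A) ^ (p / ((n:ℝ) + p)) + gr)) =
      (lam * (A ^ (-(p / ((n:ℝ) + p))) + 1)) * gr ^ A * jr ^ ((1 - lam) * n / p) := by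
    have e1 : s ^ (lam - 1) =
        gr ^ ((((n:ℝ) + p) / p) * (lam - 1)) * jr ^ ((-((n:ℝ) / p)) * (lam - 1)) := by
      rw [hs_def, Real.mul_rpow (Real.rpow_nonneg hgr.le _) (Real.rpow_nonneg hjr.le _),
        ← Real.rpow_mul hgr.le, ← Real.rpow_mul hjr.le]
    have e2 : (s / A) ^ (p / ((n:ℝ) + p)) =
        A ^ (-(p / ((n:ℝ) + p))) * (gr * jr ^ (-((n:ℝ) / ((n:ℝ) + p)))) := by
      rw [Real.div_rpow hs.le hA.le, Real.rpow_neg hA.le, hs_def,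
        Real.mul_rpow (Real.rpow_nonneg hgr.le _) (Real.rpow_nonneg hjr.le _),
        ← Real.rpow_mul hgr.le, ← Real.rpow_mul hjr.le,
        show (((n:ℝ) + p) / p) * (p / ((n:ℝ) + p)) = 1 by field_simp,
        show (-((n:ℝ) / p)) * (p / ((n:ℝ) + p)) = -((n:ℝ) / ((n:ℝ) + p)) by field_simp,
        Real.rpow_one]
      ring
    have e3 : jr ^ ((n:ℝ) / ((n:ℝ) + p)) * jr ^ (-((n:ℝ) / ((n:ℝ) + p))) = 1 := by
      rw [← Real.rpow_add hjr]; simp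
    have e4 : gr ^ ((((n:ℝ) + p) / p) * (lam - 1)) * gr = gr ^ A := by
      nth_rewrite 2 [← Real.rpow_one gr]
      rw [← Real.rpow_add hgr]
      congr 1
      rw [hA_def]; field_simp
    have e5 : jr ^ ((-((n:ℝ) / p)) * (lam - 1)) = jr ^ ((1 - lam) * n / p) := by
      congr 1; ring
    rw [e1, e2, e5]
    have e6 : jr ^ ((n:ℝ) / ((n:ℝ) + p)) *
        (A ^ (-(p / ((n:ℝ) + p))) * (gr * jr ^ (-((n:ℝ) / ((n:ℝ) + p))))) =
        A ^ (-(p / ((n:ℝ) + p))) * gr := by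
      rw [show jr ^ ((n:ℝ) / ((n:ℝ) + p)) *
          (A ^ (-(p / ((n:ℝ) + p))) * (gr * jr ^ (-((n:ℝ) / ((n:ℝ) + p))))) =
          A ^ (-(p / ((n:ℝ) + p))) * gr *
            (jr ^ ((n:ℝ) / ((n:ℝ) + p)) * jr ^ (-((n:ℝ) / ((n:ℝ) + p)))) from by ring,
        e3, mul_one]
    rw [e6]
    rw [show gr ^ ((((n:ℝ) + p) / p) * (lam - 1)) * jr ^ ((1 - lam) * n / p) *
        (A ^ (-(p / ((n:ℝ) + p))) * gr + gr) =
        (A ^ (-(p / ((n:ℝ) + p))) + 1) * (gr ^ ((((n:ℝ) + p) / p) * (lam - 1)) * gr) *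
          jr ^ ((1 - lam) * n / p) from by ring, e4]
    ring
  calc I ≤ _ := hmain
    _ = ENNReal.ofReal (lam * (s ^ (lam - 1) *
        (jr ^ ((n:ℝ) / ((n:ℝ) + p)) * (s / A) ^ (p / ((n:ℝ) + p)) + gr))) := collapse
    _ = ENNReal.ofReal ((lam * (A ^ (-(p / ((n:ℝ) + p))) + 1)) * gr ^ A *
        jr ^ ((1 - lam) * n / p)) := by rw [hreal]
    _ = ENNReal.ofReal (lam * (A ^ (-(p / ((n:ℝ) + p))) + 1)) * G ^ A *
        J ^ ((1 - lam) * n / p) := by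
        rw [hGr, hJr, ENNReal.ofReal_rpow_of_pos hgr, ENNReal.ofReal_rpow_of_pos hjr,
          ENNReal.ofReal_mul (by positivity), ENNReal.ofReal_mul (by positivity)]
end

section
/- Let $M \subset \mathbb{R}^n$ be a compact set of positive Lebesgue measure, and for $\xi \in S^{n-1}$ let $L_\xi = \{t \in [0,\infty) : t\xi \in M\}$. Define the star set $SM$ by its radial function $\rho_{SM}(\xi) = (n \cdot \mu(\delta(L_\xi)))^{1/n}$, where $\delta(t) = t^n/n$ and $\mu$ is one-dimensional Lebesgue measure. Then $\mathrm{vol}(SM) = \mathrm{vol}(M)$, and for every $x \in \mathbb{R}^n$ and $p \ge 1$, $\int_M |\langle x, y\rangle|^p dy \ge \int_{SM} |\langle x, y\rangle|^p dy$. -/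
open MeasureTheory Real Set Metric
open scoped ENNReal RealInnerProductSpace
set_option maxHeartbeats 1600000

theorem my_cov {s : Set ℝ} (hs : MeasurableSet s) {f f' : ℝ → ℝ}
    (hf' : ∀ x ∈ s, HasDerivWithinAt f (f' x) s x) (hf : Set.InjOn f s) (g : ℝ → ℝ≥0∞) :
    ∫⁻ x in f '' s, g x = ∫⁻ x in s, ENNReal.ofReal |f' x| * g (f x) := by
  simpa only [ContinuousLinearMap.det_toSpanSingleton] using
    lintegral_image_eq_lintegral_abs_det_fderiv_mul volume hs
      (fun x hx => (hf' x hx).hasFDerivWithinAt) hf g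

theorem my_bathtub {A : Set ℝ} (hA : MeasurableSet A) (hA0 : A ⊆ Set.Ici 0) {c : ℝ} (hc : 0 ≤ c)
    (hvol : volume A = ENNReal.ofReal c) {g : ℝ → ℝ≥0∞} (hg : MonotoneOn g (Set.Ici 0)) :
    ∫⁻ s in Set.Icc 0 c, g s ≤ ∫⁻ s in A, g s := by
  set I : Set ℝ := Set.Icc 0 c with hI
  have hIm : MeasurableSet I := measurableSet_Icc
  have hIA : MeasurableSet (I \ A) := hIm.diff hA
  have hAI : MeasurableSet (A \ I) := hA.diff hIm
  have hd1 : Disjoint (I ∩ A) (I \ A) := disjoint_sdiff_self_right.mono_left inter_subset_right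
  have hd2 : Disjoint (I ∩ A) (A \ I) := disjoint_sdiff_self_right.mono_left inter_subset_left
  have hsplitI : ∫⁻ s in I, g s = (∫⁻ s in I ∩ A, g s) + ∫⁻ s in I \ A, g s := by
    rw [← lintegral_union hIA hd1, Set.inter_union_diff]
  have hsplitA : ∫⁻ s in A, g s = (∫⁻ s in I ∩ A, g s) + ∫⁻ s in A \ I, g s := by
    rw [← lintegral_union hAI hd2, Set.inter_comm, Set.inter_union_diff]
  rw [hsplitI, hsplitA]
  gcongr _ + ?_
  have hIvol : volume I = ENNReal.ofReal c := by simp [hI, hc]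
  have hfin : volume (I ∩ A) ≠ ⊤ := by
    refine ne_top_of_le_ne_top ?_ (measure_mono Set.inter_subset_left)
    simp [hIvol]
  have hveq : volume (I \ A) = volume (A \ I) := by
    have h1 : volume (I ∩ A) + volume (I \ A) = ENNReal.ofReal c := by
      rw [← hIvol, ← measure_union hd1 hIA, Set.inter_union_diff]
    have h2 : volume (I ∩ A) + volume (A \ I) = ENNReal.ofReal c := by
      rw [← hvol, ← measure_union hd2 hAI, Set.inter_comm, Set.inter_union_diff]
    exact (ENNReal.add_right_inj hfin).1 (h1.trans h2.symm)
  calc ∫⁻ s in I \ A, g s ≤ ∫⁻ _ in I \ A, g c := by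
        refine setLIntegral_mono' hIA fun s hs => hg hs.1.1 hc hs.1.2
    _ = g c * volume (A \ I) := by rw [setLIntegral_const, hveq]
    _ = ∫⁻ _ in A \ I, g c := by rw [setLIntegral_const]
    _ ≤ ∫⁻ s in A \ I, g s := by
        refine setLIntegral_mono' hAI fun s hs => hg hc (hA0 hs.1) ?_
        by_contra h
        exact hs.2 ⟨hA0 hs.1, le_of_not_gt fun hlt => h hlt.le⟩

theorem delta_sm {n : ℕ} (hn : 1 ≤ n) :
    StrictMonoOn (fun t : ℝ => t ^ n / (n : ℝ)) (Set.Ici 0) := by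
  intro a ha b hb hab
  have hnp : (0:ℝ) < n := by exact_mod_cast hn
  have := pow_lt_pow_left₀ hab ha (by omega : n ≠ 0)
  exact div_lt_div_of_pos_right this hnp

theorem cov_delta {n : ℕ} (hn : 1 ≤ n) {s : Set ℝ} (hs : MeasurableSet s)
    (hsub : s ⊆ Set.Ici 0) (g : ℝ → ℝ≥0∞) :
    ∫⁻ x in (fun t : ℝ => t ^ n / (n : ℝ)) '' s, g x
      = ∫⁻ t in s, ENNReal.ofReal (t ^ (n - 1)) * g (t ^ n / (n : ℝ)) := by
  have hne : (n : ℝ) ≠ 0 := by positivity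
  have hder : ∀ x ∈ s, HasDerivWithinAt (fun t : ℝ => t ^ n / (n : ℝ)) (x ^ (n - 1)) s x := by
    intro x _
    have := (hasDerivAt_pow n x).div_const (n : ℝ)
    have h2 : (n : ℝ) * x ^ (n - 1) / (n : ℝ) = x ^ (n - 1) := by field_simp
    rw [h2] at this
    exact this.hasDerivWithinAt
  rw [my_cov hs hder ((delta_sm hn).injOn.mono hsub) g]
  refine setLIntegral_congr_fun hs (fun t ht => ?_)
  simp only [abs_of_nonneg (pow_nonneg (Set.mem_Ici.1 (hsub ht)) (n - 1) : (0:ℝ) ≤ t ^ (n - 1))]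

theorem my_polar {n : ℕ} (hn : 1 ≤ n) {S : Set (EuclideanSpace ℝ (Fin n))}
    (hS : MeasurableSet S) {f : EuclideanSpace ℝ (Fin n) → ℝ≥0∞} (hf : Measurable f) :
    ∫⁻ y in S, f y
      = ∫⁻ ξ : sphere (0 : EuclideanSpace ℝ (Fin n)) 1,
          (∫⁻ r in Set.Ioi (0 : ℝ),
            ENNReal.ofReal (r ^ (n - 1)) * S.indicator f (r • ξ.1))
          ∂((volume : Measure (EuclideanSpace ℝ (Fin n))).toSphere) := by
  haveI : Nonempty (Fin n) := ⟨⟨0, hn⟩⟩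
  have hg : Measurable (S.indicator f) := hf.indicator hS
  set e := homeomorphUnitSphereProd (EuclideanSpace ℝ (Fin n)) with he
  set h : sphere (0 : EuclideanSpace ℝ (Fin n)) 1 × Set.Ioi (0 : ℝ) → ℝ≥0∞ :=
    fun z => S.indicator f (z.2.1 • z.1.1) with hh_def
  have hh : Measurable h := by
    apply hg.comp
    exact ((continuous_subtype_val.comp continuous_snd).smul
      (continuous_subtype_val.comp continuous_fst)).measurable
  have MP := (volume : Measure (EuclideanSpace ℝ (Fin n))).measurePreserving_homeomorphUnitSphereProd
  have hdim : Module.finrank ℝ (EuclideanSpace ℝ (Fin n)) = n := finrank_euclideanSpace_fin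
  calc ∫⁻ y in S, f y = ∫⁻ y, S.indicator f y ∂(volume : Measure (EuclideanSpace ℝ (Fin n))) :=
        (lintegral_indicator hS f).symm
    _ = ∫⁻ y in ({0}ᶜ : Set (EuclideanSpace ℝ (Fin n))), S.indicator f y := by
        rw [MeasureTheory.restrict_compl_singleton]
    _ = ∫⁻ x : ({0}ᶜ : Set (EuclideanSpace ℝ (Fin n))), S.indicator f x.1
          ∂((volume : Measure (EuclideanSpace ℝ (Fin n))).comap (↑)) := by
        rw [lintegral_subtype_comap (measurableSet_singleton (0 : EuclideanSpace ℝ (Fin n))).compl]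
    _ = ∫⁻ x : ({0}ᶜ : Set (EuclideanSpace ℝ (Fin n))), h (e x)
          ∂((volume : Measure (EuclideanSpace ℝ (Fin n))).comap (↑)) := by
        refine lintegral_congr fun x => ?_
        simp only [hh_def]
        rw [← homeomorphUnitSphereProd_symm_apply_coe (EuclideanSpace ℝ (Fin n)) (e x), he,
          Homeomorph.symm_apply_apply]
    _ = ∫⁻ z, h z ∂((volume : Measure (EuclideanSpace ℝ (Fin n))).toSphere.prod
          (Measure.volumeIoiPow (Module.finrank ℝ (EuclideanSpace ℝ (Fin n)) - 1))) :=
        MP.lintegral_comp hh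
    _ = ∫⁻ ξ : sphere (0 : EuclideanSpace ℝ (Fin n)) 1, (∫⁻ r : Set.Ioi (0:ℝ), h (ξ, r)
          ∂(Measure.volumeIoiPow (n - 1)))
          ∂((volume : Measure (EuclideanSpace ℝ (Fin n))).toSphere) := by
        rw [hdim, lintegral_prod _ hh.aemeasurable]
    _ = _ := by
        refine lintegral_congr fun ξ => ?_
        rw [Measure.volumeIoiPow,
          lintegral_withDensity_eq_lintegral_mul_non_measurable₀ _
            ((measurable_subtype_coe.pow_const _).ennreal_ofReal.aemeasurable)
            (Filter.Eventually.of_forall fun r => ENNReal.ofReal_lt_top)]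
        exact lintegral_subtype_comap measurableSet_Ioi
          fun t => ENNReal.ofReal (t ^ (n-1)) * S.indicator f (t • ξ.1)

theorem inner_step {n : ℕ} {S : Set (EuclideanSpace ℝ (Fin n))} {ξ : EuclideanSpace ℝ (Fin n)}
    {T : Set ℝ} (hT : MeasurableSet T)
    (hmem : ∀ r : ℝ, 0 < r → ((r • ξ ∈ S) ↔ r ∈ T)) (f : EuclideanSpace ℝ (Fin n) → ℝ≥0∞) :
    ∫⁻ r in Set.Ioi (0:ℝ), ENNReal.ofReal (r ^ (n - 1)) * S.indicator f (r • ξ)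
      = ∫⁻ r in T ∩ Set.Ioi (0:ℝ), ENNReal.ofReal (r ^ (n - 1)) * f (r • ξ) := by
  have hpt : ∀ r ∈ Set.Ioi (0:ℝ), ENNReal.ofReal (r ^ (n - 1)) * S.indicator f (r • ξ)
      = T.indicator (fun r => ENNReal.ofReal (r ^ (n - 1)) * f (r • ξ)) r := by
    intro r hr
    by_cases h : r ∈ T
    · rw [Set.indicator_of_mem h, Set.indicator_of_mem ((hmem r hr).2 h)]
    · rw [Set.indicator_of_notMem h,
        Set.indicator_of_notMem (fun hc => h ((hmem r hr).1 hc)), mul_zero]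
  rw [setLIntegral_congr_fun measurableSet_Ioi hpt,
    lintegral_indicator hT, Measure.restrict_restrict hT]
theorem L_compact {n : ℕ} {M : Set (EuclideanSpace ℝ (Fin n))} (hMc : IsCompact M)
    {ξ : EuclideanSpace ℝ (Fin n)} (hξ : ‖ξ‖ = 1) :
    IsCompact {t : ℝ | 0 ≤ t ∧ t • ξ ∈ M} := by
  obtain ⟨R, hR⟩ := hMc.isBounded.subset_closedBall 0
  refine IsCompact.of_isClosed_subset (isCompact_Icc (a := (0:ℝ)) (b := R)) ?_ ?_
  · have : {t : ℝ | 0 ≤ t ∧ t • ξ ∈ M} = Set.Ici 0 ∩ (fun t : ℝ => t • ξ) ⁻¹' M := rfl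
    rw [this]
    exact isClosed_Ici.inter (hMc.isClosed.preimage (continuous_id.smul continuous_const))
  · rintro t ⟨ht0, htM⟩
    refine ⟨ht0, ?_⟩
    have := hR htM
    rw [mem_closedBall_zero_iff, norm_smul, hξ, mul_one, Real.norm_eq_abs,
      abs_of_nonneg ht0] at this
    exact this

theorem delta_img_Icc {n : ℕ} (hn : 1 ≤ n) {a : ℝ} (ha : 0 ≤ a) :
    (fun t : ℝ => t ^ n / (n : ℝ)) '' Set.Icc 0 a = Set.Icc 0 (a ^ n / (n : ℝ)) := by
  have hne : (n:ℝ) ≠ 0 := by positivity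
  have hδ0 : (0:ℝ) ^ n / (n:ℝ) = 0 := by
    rw [zero_pow (by omega : n ≠ 0), zero_div]
  apply Set.Subset.antisymm
  · rintro y ⟨t, ⟨ht0, hta⟩, rfl⟩
    constructor
    · positivity
    · have hnp : (0:ℝ) < n := by positivity
      exact div_le_div_of_nonneg_right (a := t^n) (pow_le_pow_left₀ ht0 hta n) hnp.le
  · intro y hy
    have := intermediate_value_Icc ha
      (Continuous.continuousOn (by continuity : Continuous fun t : ℝ => t ^ n / (n:ℝ)))
    apply this
    rw [hδ0]
    exact hy

theorem rho_pow {n : ℕ} (hn : 1 ≤ n) {c : ℝ} (hc : 0 ≤ c) :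
    (((n:ℝ) * c) ^ (1/(n:ℝ))) ^ n / (n:ℝ) = c := by
  have hne : (n:ℝ) ≠ 0 := by positivity
  have hnc : 0 ≤ (n:ℝ) * c := by positivity
  rw [← Real.rpow_natCast (((n:ℝ) * c) ^ (1/(n:ℝ))) n, ← Real.rpow_mul hnc,
    one_div_mul_cancel hne, Real.rpow_one, mul_div_cancel_left₀ _ hne]

theorem g_delta {n : ℕ} (hn : 1 ≤ n) {p : ℝ} (hp : 1 ≤ p) {t : ℝ} (ht : 0 ≤ t) :
    ENNReal.ofReal (t ^ (n-1)) * ENNReal.ofReal (((n:ℝ) * (t ^ n / (n:ℝ))) ^ (p/(n:ℝ)))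
      = ENNReal.ofReal (t ^ (n-1) * t ^ p) := by
  have hne : (n:ℝ) ≠ 0 := by positivity
  have h1 : (n:ℝ) * (t ^ n / (n:ℝ)) = t ^ n := by field_simp
  have h2 : ((t:ℝ) ^ n) ^ (p/(n:ℝ)) = t ^ p := by
    rw [← Real.rpow_natCast t n, ← Real.rpow_mul ht]
    congr 1
    field_simp
  rw [h1, h2, ← ENNReal.ofReal_mul (pow_nonneg ht _)]

theorem stmt8 {n : ℕ} (hn : 1 ≤ n) (p : ℝ) (hp : 1 ≤ p)
    (M : Set (EuclideanSpace ℝ (Fin n))) (hMc : IsCompact M) (hMvol : 0 < volume M)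
    (ρ : EuclideanSpace ℝ (Fin n) → ℝ)
    (hρ : ∀ ξ : EuclideanSpace ℝ (Fin n), ‖ξ‖ = 1 →
      ρ ξ = ((n : ℝ) *
        (volume ((fun t : ℝ => t ^ n / (n : ℝ)) '' {t : ℝ | 0 ≤ t ∧ t • ξ ∈ M})).toReal) ^
          ((1 : ℝ) / (n : ℝ)))
    (SM : Set (EuclideanSpace ℝ (Fin n)))
    (hSM : SM = {y : EuclideanSpace ℝ (Fin n) | y = 0 ∨ ‖y‖ ≤ ρ (‖y‖⁻¹ • y)}) :
    volume SM = volume M ∧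
    ∀ x : EuclideanSpace ℝ (Fin n),
      (∫⁻ y in SM, ENNReal.ofReal (|⟪x, y⟫| ^ p)) ≤
        ∫⁻ y in M, ENNReal.ofReal (|⟪x, y⟫| ^ p) := by
  haveI : Nonempty (Fin n) := ⟨⟨0, hn⟩⟩
  have hMm : MeasurableSet M := hMc.isClosed.measurableSet
  have hδc : Continuous fun t : ℝ => t ^ n / (n : ℝ) := (continuous_pow n).div_const _
  have hunit : ∀ ξ : sphere (0 : EuclideanSpace ℝ (Fin n)) 1, ‖(ξ : EuclideanSpace ℝ (Fin n))‖ = 1 :=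
    fun ξ => mem_sphere_zero_iff_norm.1 ξ.2
  have hLc : ∀ ξ : sphere (0 : EuclideanSpace ℝ (Fin n)) 1,
      IsCompact {t : ℝ | 0 ≤ t ∧ t • (ξ : EuclideanSpace ℝ (Fin n)) ∈ M} :=
    fun ξ => L_compact hMc (hunit ξ)
  have hLm : ∀ ξ : sphere (0 : EuclideanSpace ℝ (Fin n)) 1,
      MeasurableSet {t : ℝ | 0 ≤ t ∧ t • (ξ : EuclideanSpace ℝ (Fin n)) ∈ M} :=
    fun ξ => (hLc ξ).isClosed.measurableSet
  have hLsub : ∀ ξ : sphere (0 : EuclideanSpace ℝ (Fin n)) 1,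
      {t : ℝ | 0 ≤ t ∧ t • (ξ : EuclideanSpace ℝ (Fin n)) ∈ M} ⊆ Set.Ici 0 :=
    fun ξ t ht => ht.1
  -- the image sets
  have hAc : ∀ ξ : sphere (0 : EuclideanSpace ℝ (Fin n)) 1,
      IsCompact ((fun t : ℝ => t ^ n / (n : ℝ)) ''
        {t : ℝ | 0 ≤ t ∧ t • (ξ : EuclideanSpace ℝ (Fin n)) ∈ M}) :=
    fun ξ => (hLc ξ).image hδc
  have hAm := fun ξ => (hAc ξ).isClosed.measurableSet
  have hAfin : ∀ ξ : sphere (0 : EuclideanSpace ℝ (Fin n)) 1,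
      volume ((fun t : ℝ => t ^ n / (n : ℝ)) ''
        {t : ℝ | 0 ≤ t ∧ t • (ξ : EuclideanSpace ℝ (Fin n)) ∈ M}) ≠ ⊤ :=
    fun ξ => (hAc ξ).measure_lt_top.ne
  have hAsub : ∀ ξ : sphere (0 : EuclideanSpace ℝ (Fin n)) 1,
      (fun t : ℝ => t ^ n / (n : ℝ)) ''
        {t : ℝ | 0 ≤ t ∧ t • (ξ : EuclideanSpace ℝ (Fin n)) ∈ M} ⊆ Set.Ici 0 := by
    rintro ξ y ⟨t, ⟨ht0, _⟩, rfl⟩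
    have h0 : (0:ℝ) < n := by positivity
    exact Set.mem_Ici.2 (by positivity)
  have hAvol : ∀ ξ : sphere (0 : EuclideanSpace ℝ (Fin n)) 1,
      volume ((fun t : ℝ => t ^ n / (n : ℝ)) ''
        {t : ℝ | 0 ≤ t ∧ t • (ξ : EuclideanSpace ℝ (Fin n)) ∈ M})
      = ∫⁻ t in {t : ℝ | 0 ≤ t ∧ t • (ξ : EuclideanSpace ℝ (Fin n)) ∈ M},
          ENNReal.ofReal (t ^ (n - 1)) := by
    intro ξ
    rw [← setLIntegral_one, cov_delta hn (hLm ξ) (hLsub ξ)]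
    simp
  have hρeq : ∀ ξ : sphere (0 : EuclideanSpace ℝ (Fin n)) 1,
      ρ (ξ : EuclideanSpace ℝ (Fin n)) = ((n : ℝ) *
        (volume ((fun t : ℝ => t ^ n / (n : ℝ)) ''
          {t : ℝ | 0 ≤ t ∧ t • (ξ : EuclideanSpace ℝ (Fin n)) ∈ M})).toReal) ^ (1/(n:ℝ)) :=
    fun ξ => hρ _ (hunit ξ)
  have hρnn : ∀ ξ : sphere (0 : EuclideanSpace ℝ (Fin n)) 1,
      0 ≤ ρ (ξ : EuclideanSpace ℝ (Fin n)) := by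
    intro ξ; rw [hρeq ξ]; positivity
  have hδρ : ∀ ξ : sphere (0 : EuclideanSpace ℝ (Fin n)) 1,
      (ρ (ξ : EuclideanSpace ℝ (Fin n))) ^ n / (n:ℝ)
        = (volume ((fun t : ℝ => t ^ n / (n : ℝ)) ''
            {t : ℝ | 0 ≤ t ∧ t • (ξ : EuclideanSpace ℝ (Fin n)) ∈ M})).toReal := by
    intro ξ; rw [hρeq ξ]; exact rho_pow hn ENNReal.toReal_nonneg
  have hIccA : ∀ ξ : sphere (0 : EuclideanSpace ℝ (Fin n)) 1,
      (fun t : ℝ => t ^ n / (n : ℝ)) '' Set.Icc 0 (ρ (ξ : EuclideanSpace ℝ (Fin n)))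
        = Set.Icc 0 ((volume ((fun t : ℝ => t ^ n / (n : ℝ)) ''
            {t : ℝ | 0 ≤ t ∧ t • (ξ : EuclideanSpace ℝ (Fin n)) ∈ M})).toReal) := by
    intro ξ; rw [delta_img_Icc hn (hρnn ξ), hδρ ξ]
  have hIccVol : ∀ ξ : sphere (0 : EuclideanSpace ℝ (Fin n)) 1,
      ∫⁻ t in Set.Icc 0 (ρ (ξ : EuclideanSpace ℝ (Fin n))), ENNReal.ofReal (t ^ (n-1))
        = volume ((fun t : ℝ => t ^ n / (n : ℝ)) ''
            {t : ℝ | 0 ≤ t ∧ t • (ξ : EuclideanSpace ℝ (Fin n)) ∈ M}) := by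
    intro ξ
    have h1 := cov_delta hn (measurableSet_Icc
      (a := (0:ℝ)) (b := ρ (ξ : EuclideanSpace ℝ (Fin n)))) (fun t ht => ht.1) (fun _ => 1)
    rw [hIccA ξ] at h1
    rw [setLIntegral_one] at h1
    rw [Real.volume_Icc, sub_zero, ENNReal.ofReal_toReal (hAfin ξ)] at h1
    have h2 : ∫⁻ t in Set.Icc 0 (ρ (ξ : EuclideanSpace ℝ (Fin n))), ENNReal.ofReal (t ^ (n-1))
        = ∫⁻ t in Set.Icc 0 (ρ (ξ : EuclideanSpace ℝ (Fin n))),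
            ENNReal.ofReal (t ^ (n-1)) * 1 := by simp
    rw [h2]
    exact h1.symm
  -- membership characterizations
  have hmemSM : ∀ ξ : sphere (0 : EuclideanSpace ℝ (Fin n)) 1, ∀ r : ℝ, 0 < r →
      ((r • (ξ : EuclideanSpace ℝ (Fin n)) ∈ SM) ↔ r ∈ Set.Iic (ρ (ξ : EuclideanSpace ℝ (Fin n)))) := by
    intro ξ r hr
    have hξ0 : (ξ : EuclideanSpace ℝ (Fin n)) ≠ 0 := ne_of_mem_sphere ξ.2 one_ne_zero
    have hne : r • (ξ : EuclideanSpace ℝ (Fin n)) ≠ 0 := smul_ne_zero hr.ne' hξ0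
    have hnorm : ‖r • (ξ : EuclideanSpace ℝ (Fin n))‖ = r := by
      rw [norm_smul, hunit ξ, mul_one, Real.norm_eq_abs, abs_of_pos hr]
    have hdir : ‖r • (ξ : EuclideanSpace ℝ (Fin n))‖⁻¹ • (r • (ξ : EuclideanSpace ℝ (Fin n)))
        = (ξ : EuclideanSpace ℝ (Fin n)) := by
      rw [hnorm, smul_smul, inv_mul_cancel₀ hr.ne', one_smul]
    rw [hSM]
    simp only [Set.mem_setOf_eq, Set.mem_Iic]
    rw [hdir, hnorm]
    exact or_iff_right hne
  have hmemM : ∀ ξ : sphere (0 : EuclideanSpace ℝ (Fin n)) 1, ∀ r : ℝ, 0 < r →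
      ((r • (ξ : EuclideanSpace ℝ (Fin n)) ∈ M) ↔
        r ∈ {t : ℝ | 0 ≤ t ∧ t • (ξ : EuclideanSpace ℝ (Fin n)) ∈ M}) :=
    fun ξ r hr => ⟨fun h => ⟨hr.le, h⟩, fun h => h.2⟩
  have hLae : ∀ ξ : sphere (0 : EuclideanSpace ℝ (Fin n)) 1,
      ({t : ℝ | 0 ≤ t ∧ t • (ξ : EuclideanSpace ℝ (Fin n)) ∈ M} ∩ Set.Ioi 0 : Set ℝ)
        =ᵐ[volume] {t : ℝ | 0 ≤ t ∧ t • (ξ : EuclideanSpace ℝ (Fin n)) ∈ M} := by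
    intro ξ
    rw [MeasureTheory.ae_eq_set]
    constructor
    · refine measure_mono_null (fun t ht => (ht.2 ht.1.1).elim) measure_empty
    · refine measure_mono_null (fun t ht => ?_) (measure_singleton (0:ℝ))
      have h1 : ¬ (0 < t) := fun hc => ht.2 ⟨ht.1, hc⟩
      show t ∈ ({(0:ℝ)} : Set ℝ)
      rw [Set.mem_singleton_iff]
      exact le_antisymm (not_lt.1 h1) ht.1.1
  -- measurability of ρ on the sphere and of SM
  have hρm : Measurable fun ξ : sphere (0 : EuclideanSpace ℝ (Fin n)) 1 =>
      ρ (ξ : EuclideanSpace ℝ (Fin n)) := by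
    have hZ : IsClosed {z : sphere (0 : EuclideanSpace ℝ (Fin n)) 1 × ℝ |
        0 ≤ z.2 ∧ z.2 • (z.1 : EuclideanSpace ℝ (Fin n)) ∈ M} :=
      (isClosed_le continuous_const continuous_snd).inter
        (hMc.isClosed.preimage (continuous_snd.smul (continuous_subtype_val.comp continuous_fst)))
    have hGm : Measurable fun ξ : sphere (0 : EuclideanSpace ℝ (Fin n)) 1 =>
        ∫⁻ t : ℝ, Set.indicator {z : sphere (0 : EuclideanSpace ℝ (Fin n)) 1 × ℝ |
          0 ≤ z.2 ∧ z.2 • (z.1 : EuclideanSpace ℝ (Fin n)) ∈ M}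
          (fun z => ENNReal.ofReal (z.2 ^ (n-1))) (ξ, t) :=
      Measurable.lintegral_prod_right'
        (((measurable_snd.pow_const _).ennreal_ofReal).indicator hZ.measurableSet)
    have heq : (fun ξ : sphere (0 : EuclideanSpace ℝ (Fin n)) 1 =>
        ρ (ξ : EuclideanSpace ℝ (Fin n)))
        = fun ξ => ((n:ℝ) * (∫⁻ t : ℝ, Set.indicator {z : sphere (0 : EuclideanSpace ℝ (Fin n)) 1 × ℝ |
            0 ≤ z.2 ∧ z.2 • (z.1 : EuclideanSpace ℝ (Fin n)) ∈ M}
            (fun z => ENNReal.ofReal (z.2 ^ (n-1))) (ξ, t)).toReal) ^ (1/(n:ℝ)) := by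
      funext ξ
      have h3 : ∫⁻ t : ℝ, Set.indicator {t : ℝ | 0 ≤ t ∧ t • (ξ : EuclideanSpace ℝ (Fin n)) ∈ M}
          (fun t => ENNReal.ofReal (t ^ (n-1))) t
          = ∫⁻ t : ℝ, Set.indicator {z : sphere (0 : EuclideanSpace ℝ (Fin n)) 1 × ℝ |
              0 ≤ z.2 ∧ z.2 • (z.1 : EuclideanSpace ℝ (Fin n)) ∈ M}
              (fun z => ENNReal.ofReal (z.2 ^ (n-1))) (ξ, t) := by
        refine lintegral_congr fun t => ?_
        by_cases h : t ∈ {t : ℝ | 0 ≤ t ∧ t • (ξ : EuclideanSpace ℝ (Fin n)) ∈ M}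
        · rw [Set.indicator_of_mem h, Set.indicator_of_mem
            (show (ξ, t) ∈ {z : sphere (0 : EuclideanSpace ℝ (Fin n)) 1 × ℝ |
              0 ≤ z.2 ∧ z.2 • (z.1 : EuclideanSpace ℝ (Fin n)) ∈ M} from h)]
        · rw [Set.indicator_of_notMem h, Set.indicator_of_notMem
            (show (ξ, t) ∉ {z : sphere (0 : EuclideanSpace ℝ (Fin n)) 1 × ℝ |
              0 ≤ z.2 ∧ z.2 • (z.1 : EuclideanSpace ℝ (Fin n)) ∈ M} from h)]
      rw [hρeq ξ, hAvol ξ, ← lintegral_indicator (hLm ξ), h3]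
    rw [heq]
    exact (Real.continuous_rpow_const (by positivity)).measurable.comp
      (measurable_const.mul hGm.ennreal_toReal)
  have hSMm : MeasurableSet SM := by
    have hset : SM = {(0 : EuclideanSpace ℝ (Fin n))} ∪
        (Subtype.val '' {z : ({0}ᶜ : Set (EuclideanSpace ℝ (Fin n))) |
          ‖(z : EuclideanSpace ℝ (Fin n))‖ ≤
            ρ ((homeomorphUnitSphereProd (EuclideanSpace ℝ (Fin n)) z).1 :
              EuclideanSpace ℝ (Fin n))}) := by
      rw [hSM]
      ext y
      simp only [Set.mem_union, Set.mem_singleton_iff, Set.mem_setOf_eq, Set.mem_image]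
      constructor
      · rintro (h0 | hle)
        · exact Or.inl h0
        · by_cases hy : y = 0
          · exact Or.inl hy
          · refine Or.inr ⟨⟨y, hy⟩, ?_, rfl⟩
            simpa using hle
      · rintro (h0 | ⟨z, hz, rfl⟩)
        · exact Or.inl h0
        · right; simpa using hz
    rw [hset]
    apply (measurableSet_singleton _).union
    apply (MeasurableEmbedding.subtype_coe
      (measurableSet_singleton (0 : EuclideanSpace ℝ (Fin n))).compl).measurableSet_image.2
    exact measurableSet_le measurable_subtype_coe.norm
      (hρm.comp (continuous_fst.comp
        (homeomorphUnitSphereProd (EuclideanSpace ℝ (Fin n))).continuous).measurable)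
  constructor
  · -- volumes agree
    rw [← setLIntegral_one SM, ← setLIntegral_one M,
      my_polar hn hSMm measurable_const, my_polar hn hMm measurable_const]
    refine lintegral_congr fun ξ => ?_
    rw [inner_step measurableSet_Iic (hmemSM ξ) (fun _ => 1),
      inner_step (hLm ξ) (hmemM ξ) (fun _ => 1),
      Set.inter_comm, Set.Ioi_inter_Iic, setLIntegral_congr Ioc_ae_eq_Icc,
      setLIntegral_congr (hLae ξ)]
    have e1 : ∫⁻ r in Set.Icc 0 (ρ (ξ : EuclideanSpace ℝ (Fin n))),
        ENNReal.ofReal (r ^ (n-1)) * 1 = ∫⁻ r in Set.Icc 0 (ρ (ξ : EuclideanSpace ℝ (Fin n))),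
        ENNReal.ofReal (r ^ (n-1)) := by
      exact setLIntegral_congr_fun measurableSet_Icc (fun t _ => mul_one _)
    have e2 : ∫⁻ r in {t : ℝ | 0 ≤ t ∧ t • (ξ : EuclideanSpace ℝ (Fin n)) ∈ M},
        ENNReal.ofReal (r ^ (n-1)) * 1 = ∫⁻ r in {t : ℝ | 0 ≤ t ∧ t • (ξ : EuclideanSpace ℝ (Fin n)) ∈ M},
        ENNReal.ofReal (r ^ (n-1)) := by
      exact setLIntegral_congr_fun (hLm ξ) (fun t _ => mul_one _)
    rw [e1, e2, hIccVol ξ, ← hAvol ξ]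
  · -- the moment inequality
    intro x
    set f : EuclideanSpace ℝ (Fin n) → ℝ≥0∞ := fun y => ENNReal.ofReal (|⟪x, y⟫| ^ p) with hf_def
    have hfm : Measurable f := by
      have h1 : Continuous fun y : EuclideanSpace ℝ (Fin n) => ⟪x, y⟫ :=
        continuous_const.inner continuous_id
      exact ((Real.continuous_rpow_const (le_trans zero_le_one hp)).comp h1.abs).measurable.ennreal_ofReal
    set g : ℝ → ℝ≥0∞ := fun s => ENNReal.ofReal (((n:ℝ) * s) ^ (p / (n:ℝ))) with hg_def
    have hgm : MonotoneOn g (Set.Ici 0) := by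
      intro a ha b hb hab
      exact ENNReal.ofReal_le_ofReal (Real.rpow_le_rpow (mul_nonneg (by positivity) ha)
        (mul_le_mul_of_nonneg_left hab (by positivity))
        (div_nonneg (by linarith) (by positivity)))
    have hpt : ∀ ξ : sphere (0 : EuclideanSpace ℝ (Fin n)) 1, ∀ r : ℝ, 0 < r →
        ENNReal.ofReal (r ^ (n-1)) * f (r • (ξ : EuclideanSpace ℝ (Fin n)))
          = ENNReal.ofReal (|⟪x, (ξ : EuclideanSpace ℝ (Fin n))⟫| ^ p) *
            ENNReal.ofReal (r ^ (n-1) * r ^ p) := by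
      intro ξ r hr
      have h1 : ⟪x, r • (ξ : EuclideanSpace ℝ (Fin n))⟫ = r * ⟪x, (ξ : EuclideanSpace ℝ (Fin n))⟫ :=
        real_inner_smul_right x _ r
      have h2 : |⟪x, r • (ξ : EuclideanSpace ℝ (Fin n))⟫| ^ p
          = r ^ p * |⟪x, (ξ : EuclideanSpace ℝ (Fin n))⟫| ^ p := by
        rw [h1, abs_mul, abs_of_pos hr, Real.mul_rpow hr.le (abs_nonneg _)]
      rw [hf_def]
      simp only []
      rw [h2, ENNReal.ofReal_mul (Real.rpow_nonneg hr.le p),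
        ENNReal.ofReal_mul (pow_nonneg hr.le _)]
      ring
    have hcovIcc : ∀ ξ : sphere (0 : EuclideanSpace ℝ (Fin n)) 1,
        ∫⁻ s in Set.Icc 0 ((volume ((fun t : ℝ => t ^ n / (n : ℝ)) ''
            {t : ℝ | 0 ≤ t ∧ t • (ξ : EuclideanSpace ℝ (Fin n)) ∈ M})).toReal), g s
          = ∫⁻ r in Set.Icc 0 (ρ (ξ : EuclideanSpace ℝ (Fin n))),
              ENNReal.ofReal (r ^ (n-1) * r ^ p) := by
      intro ξ
      rw [← hIccA ξ, cov_delta hn measurableSet_Icc (fun t ht => ht.1) g]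
      exact setLIntegral_congr_fun measurableSet_Icc
        (fun t ht => g_delta hn hp ht.1)
    have hcovA : ∀ ξ : sphere (0 : EuclideanSpace ℝ (Fin n)) 1,
        ∫⁻ s in (fun t : ℝ => t ^ n / (n : ℝ)) ''
            {t : ℝ | 0 ≤ t ∧ t • (ξ : EuclideanSpace ℝ (Fin n)) ∈ M}, g s
          = ∫⁻ r in {t : ℝ | 0 ≤ t ∧ t • (ξ : EuclideanSpace ℝ (Fin n)) ∈ M},
              ENNReal.ofReal (r ^ (n-1) * r ^ p) := by
      intro ξ
      rw [cov_delta hn (hLm ξ) (hLsub ξ) g]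
      exact setLIntegral_congr_fun (hLm ξ)
        (fun t ht => g_delta hn hp ht.1)
    rw [my_polar hn hSMm hfm, my_polar hn hMm hfm]
    refine lintegral_mono fun ξ => ?_
    calc ∫⁻ r in Set.Ioi (0:ℝ), ENNReal.ofReal (r ^ (n-1)) *
          SM.indicator f (r • (ξ : EuclideanSpace ℝ (Fin n)))
        = ∫⁻ r in Set.Ioc (0:ℝ) (ρ (ξ : EuclideanSpace ℝ (Fin n))),
            ENNReal.ofReal (r ^ (n-1)) * f (r • (ξ : EuclideanSpace ℝ (Fin n))) := by
          rw [inner_step measurableSet_Iic (hmemSM ξ) f, Set.inter_comm, Set.Ioi_inter_Iic]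
      _ = ENNReal.ofReal (|⟪x, (ξ : EuclideanSpace ℝ (Fin n))⟫| ^ p) *
            ∫⁻ r in Set.Icc (0:ℝ) (ρ (ξ : EuclideanSpace ℝ (Fin n))),
              ENNReal.ofReal (r ^ (n-1) * r ^ p) := by
          rw [setLIntegral_congr_fun measurableSet_Ioc
              (fun r hr => hpt ξ r hr.1),
            setLIntegral_congr Ioc_ae_eq_Icc, lintegral_const_mul' _ _ ENNReal.ofReal_ne_top]
      _ ≤ ENNReal.ofReal (|⟪x, (ξ : EuclideanSpace ℝ (Fin n))⟫| ^ p) *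
            ∫⁻ r in {t : ℝ | 0 ≤ t ∧ t • (ξ : EuclideanSpace ℝ (Fin n)) ∈ M},
              ENNReal.ofReal (r ^ (n-1) * r ^ p) := by
          refine mul_le_mul_right ?_ _
          rw [← hcovIcc ξ, ← hcovA ξ]
          exact my_bathtub (hAm ξ) (hAsub ξ) ENNReal.toReal_nonneg
            (ENNReal.ofReal_toReal (hAfin ξ)).symm hgm
      _ = ∫⁻ r in Set.Ioi (0:ℝ), ENNReal.ofReal (r ^ (n-1)) *
            M.indicator f (r • (ξ : EuclideanSpace ℝ (Fin n))) := by
          rw [inner_step (hLm ξ) (hmemM ξ) f,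
            setLIntegral_congr_fun ((hLm ξ).inter measurableSet_Ioi)
              (fun r hr => hpt ξ r hr.2),
            setLIntegral_congr (hLae ξ), lintegral_const_mul' _ _ ENNReal.ofReal_ne_top]
end

section
/- Let $f : \mathbb{R}^n \to \mathbb{R}$ be a $C^1$ function with compact support and let $N_{f,t} = \{x : |f(x)| \ge t\}$. Then for every $\eta \in (0, 1]$, $\int_0^\infty \mathrm{vol}(N_{f,t})^{\eta}\, dt \ge \left(\int_{\mathbb{R}^n} |f(x)|^{1/\eta} dx\right)^{\eta} = \|f\|_{1/\eta}$. -/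
open MeasureTheory Real
open scoped ENNReal

theorem stmt17 {n : ℕ} (f : EuclideanSpace ℝ (Fin n) → ℝ) (hf : ContDiff ℝ 1 f)
    (hsupp : HasCompactSupport f) (η : ℝ) (hη1 : 0 < η) (hη2 : η ≤ 1) :
    (∫⁻ x, ENNReal.ofReal (|f x| ^ (1 / η))) ^ η ≤
      ∫⁻ t in Set.Ioi (0 : ℝ), volume {x | t ≤ |f x|} ^ η := by
  have hfc : Continuous f := hf.continuous
  have hmf : Measurable f := hfc.measurable
  rcases eq_or_lt_of_le hη2 with h1 | hlt
  · subst h1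
    simp only [one_div_one, Real.rpow_one, ENNReal.rpow_one]
    exact le_of_eq (lintegral_eq_lintegral_meas_le volume
      (Filter.Eventually.of_forall fun x => abs_nonneg _) hmf.abs.aemeasurable)
  · set p : ℝ := 1 / η with hpdef
    set q : ℝ := 1 / (1 - η) with hqdef
    have hpq : p.HolderConjugate q :=
      Real.holderConjugate_one_div hη1 (by linarith) (by ring)
    have hp1 : 1 < p := hpq.lt
    have hp0 : 0 < p := hpq.pos
    have hinvp : 1 / p = η := by rw [hpdef, one_div_one_div]
    set I : ℝ≥0∞ := ∫⁻ x, ENNReal.ofReal (|f x| ^ p) with hIdef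
    rcases eq_or_ne I 0 with hI0 | hI0
    · rw [hI0, ENNReal.zero_rpow_of_pos hη1]; exact zero_le
    have hItop : I ≠ ⊤ := by
      have hcont : Continuous fun x => |f x| ^ p :=
        hfc.abs.rpow_const fun x => Or.inr hp0.le
      have hcs : HasCompactSupport fun x => |f x| ^ p := by
        have h : (fun x => |f x| ^ p) = (fun t : ℝ => |t| ^ p) ∘ f := rfl
        rw [h]
        exact hsupp.comp_left (by simp [Real.zero_rpow hp0.ne'])
      exact (hcont.integrable_of_hasCompactSupport hcs).lintegral_lt_top.ne
    set g : EuclideanSpace ℝ (Fin n) → ℝ≥0∞ :=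
      fun x => ENNReal.ofReal (|f x| ^ (p - 1)) with hgdef
    have hg_meas : Measurable g := (hmf.abs.pow_const _).ennreal_ofReal
    have hgq : ∀ x, g x ^ q = ENNReal.ofReal (|f x| ^ p) := by
      intro x
      show ENNReal.ofReal (|f x| ^ (p - 1)) ^ q = _
      rw [ENNReal.ofReal_rpow_of_nonneg (Real.rpow_nonneg (abs_nonneg _) _)
        hpq.symm.nonneg, ← Real.rpow_mul (abs_nonneg _), hpq.sub_one_mul_conj]
    -- pointwise factorization
    have hfact : ∀ x, ENNReal.ofReal (|f x| ^ p) = ENNReal.ofReal |f x| * g x := by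
      intro x
      rcases eq_or_lt_of_le (abs_nonneg (f x)) with h0 | h0
      · show _ = _ * ENNReal.ofReal (|f x| ^ (p-1))
        rw [← h0, Real.zero_rpow hp0.ne',
          Real.zero_rpow (by have := hpq.sub_one_pos; positivity : p - 1 ≠ 0)]
        simp
      · show _ = _ * ENNReal.ofReal (|f x| ^ (p-1))
        rw [← ENNReal.ofReal_mul (abs_nonneg _)]
        congr 1
        have h2 : |f x| ^ p = |f x| * |f x| ^ (p - 1) := by
          have h3 := Real.rpow_add h0 1 (p - 1)
          rw [Real.rpow_one] at h3
          rw [← h3]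
          congr 1
          ring
        exact h2
    -- the product set on E × ℝ
    set A : Set (EuclideanSpace ℝ (Fin n) × ℝ) := {z | z.2 ≤ |f z.1|} with hAdef
    have hA_meas : MeasurableSet A :=
      measurableSet_le measurable_snd (hmf.abs.comp measurable_fst)
    set F : EuclideanSpace ℝ (Fin n) × ℝ → ℝ≥0∞ :=
      A.indicator (fun z => g z.1) with hFdef
    have hF_meas : Measurable F :=
      (hg_meas.comp measurable_fst).indicator hA_meas
    -- layer cake for the product
    have step2 : I = ∫⁻ t in Set.Ioi (0:ℝ), ∫⁻ x in {x | t ≤ |f x|}, g x := by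
      have h1 : ∀ x, ENNReal.ofReal |f x| * g x
          = ∫⁻ t in Set.Ioi (0:ℝ), F (x, t) := by
        intro x
        have : ∀ t, F (x, t) = (Set.Iic |f x|).indicator (fun _ => g x) t := by
          intro t
          by_cases h : t ≤ |f x| <;> simp [hFdef, hAdef, Set.indicator, h]
        simp_rw [this]
        rw [lintegral_indicator_const measurableSet_Iic,
          Measure.restrict_apply measurableSet_Iic]
        rw [show Set.Iic |f x| ∩ Set.Ioi 0 = Set.Ioc 0 |f x| by
          rw [Set.inter_comm, Set.Ioi_inter_Iic], Real.volume_Ioc, sub_zero, mul_comm]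
      have h2 : ∀ t, (∫⁻ x, F (x, t)) = ∫⁻ x in {x | t ≤ |f x|}, g x := by
        intro t
        have : ∀ x, F (x, t) = ({x | t ≤ |f x|}).indicator g x := by
          intro x
          by_cases h : t ≤ |f x| <;> simp [hFdef, hAdef, Set.indicator, h]
        simp_rw [this]
        rw [lintegral_indicator (measurableSet_le measurable_const hmf.abs)]
      calc I = ∫⁻ x, ENNReal.ofReal |f x| * g x := by
              rw [hIdef]; exact lintegral_congr hfact
        _ = ∫⁻ x, ∫⁻ t in Set.Ioi (0:ℝ), F (x, t) := lintegral_congr h1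
        _ = ∫⁻ t in Set.Ioi (0:ℝ), ∫⁻ x, F (x, t) := by
              apply lintegral_lintegral_swap
              exact (hF_meas.comp (measurable_fst.prodMk measurable_snd)).aemeasurable
        _ = ∫⁻ t in Set.Ioi (0:ℝ), ∫⁻ x in {x | t ≤ |f x|}, g x :=
              lintegral_congr h2
    -- Hölder on each slice
    have step3 : ∀ t : ℝ, (∫⁻ x in {x | t ≤ |f x|}, g x)
        ≤ volume {x | t ≤ |f x|} ^ η * I ^ (1 / q) := by
      intro t
      set N := {x | t ≤ |f x|} with hN
      have hNm : MeasurableSet N := measurableSet_le measurable_const hmf.abs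
      have holder := ENNReal.lintegral_mul_le_Lp_mul_Lq (volume.restrict N) hpq
        (aemeasurable_const (b := (1:ℝ≥0∞))) hg_meas.aemeasurable
      simp only [Pi.mul_apply, one_mul, ENNReal.one_rpow, lintegral_const,
        Measure.restrict_apply MeasurableSet.univ, Set.univ_inter] at holder
      refine le_trans holder ?_
      rw [hinvp]
      refine mul_le_mul_right (ENNReal.rpow_le_rpow ?_ hpq.symm.one_div_nonneg) _
      calc (∫⁻ x in N, g x ^ q) ≤ ∫⁻ x, g x ^ q := setLIntegral_le_lintegral _ _
        _ = I := by rw [hIdef]; exact lintegral_congr hgq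
    -- measurability of the tail volume
    have hanti : Antitone fun t : ℝ => volume {x | t ≤ |f x|} :=
      fun s t hst => measure_mono fun x hx => le_trans hst hx
    have hmu_meas : Measurable fun t : ℝ => volume {x | t ≤ |f x|} ^ η :=
      hanti.measurable.pow_const _
    -- combine
    have main : I ≤ (∫⁻ t in Set.Ioi (0:ℝ), volume {x | t ≤ |f x|} ^ η) * I ^ (1 / q) := by
      calc I = ∫⁻ t in Set.Ioi (0:ℝ), ∫⁻ x in {x | t ≤ |f x|}, g x := step2
        _ ≤ ∫⁻ t in Set.Ioi (0:ℝ), volume {x | t ≤ |f x|} ^ η * I ^ (1 / q) :=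
            lintegral_mono step3
        _ = (∫⁻ t in Set.Ioi (0:ℝ), volume {x | t ≤ |f x|} ^ η) * I ^ (1 / q) :=
            lintegral_mul_const _ hmu_meas
    have hq_ne : I ^ (1 / q) ≠ 0 := by
      simp only [ne_eq, ENNReal.rpow_eq_zero_iff, not_or]
      constructor
      · rintro ⟨h, -⟩; exact hI0 h
      · rintro ⟨h, -⟩; exact hItop h
    have hq_top : I ^ (1 / q) ≠ ⊤ := by
      simp only [ne_eq, ENNReal.rpow_eq_top_iff, not_or]
      constructor
      · rintro ⟨h, -⟩; exact hI0 h
      · rintro ⟨h, -⟩; exact hItop h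
    have hsplit : I = I ^ η * I ^ (1 / q) := by
      rw [← ENNReal.rpow_add _ _ hI0 hItop,
        show η + 1 / q = 1 by rw [hqdef, one_div_one_div]; ring, ENNReal.rpow_one]
    have main2 : I ^ η * I ^ (1 / q)
        ≤ (∫⁻ t in Set.Ioi (0:ℝ), volume {x | t ≤ |f x|} ^ η) * I ^ (1 / q) :=
      le_trans (le_of_eq hsplit.symm) main
    exact (ENNReal.mul_le_mul_iff_left hq_ne hq_top).mp main2
end
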